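/- arXiv:1302.3143 — 4 statements merged into one kernel-verified Lean document; each statement's English description precedes it below -/
import Mathlib

section
/- Let Π_A and Π_B be orthogonal projectors on a finite-dimensional complex inner product space, and let R_A = 2Π_A − I and R_B = 2Π_B − I be the reflections about their images. Let Θ ≥ 0 and let P_Θ be the orthogonal projector onto the span of eigenvectors of R_B R_A with eigenvalues e^{iθ} where |θ| ≤ Θ. Then for any vector w with Π_A w = 0, one has ‖P_Θ Π_B w‖ ≤ (Θ/2)‖w‖. -/
open scoped InnerProductSpace


lemma esg_inner_zero_of_biSup {n : ℕ} (V : ℝ → Submodule ℂ (EuclideanSpace ℂ (Fin n)))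
    (s : Set ℝ) (u x : EuclideanSpace ℂ (Fin n))
    (h : ∀ c ∈ s, ∀ y ∈ V c, ⟪u, y⟫_ℂ = 0)
    (hx : x ∈ ⨆ c ∈ s, V c) : ⟪u, x⟫_ℂ = 0 := by
  refine Submodule.iSup_induction (motive := fun z => ⟪u, z⟫_ℂ = 0) _ hx ?_ (inner_zero_right _)
    (fun a c ha hc => by simp only [inner_add_right, ha, hc, add_zero])
  intro c z hz
  exact Submodule.iSup_induction (motive := fun z => ⟪u, z⟫_ℂ = 0) _ hz
    (fun hc y hy => h c hc y hy) (inner_zero_right _)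
    (fun a d ha hd => by simp only [inner_add_right, ha, hd, add_zero])

lemma esg_pos_of_mem_iSup_nonneg {n : ℕ}
    (S : EuclideanSpace ℂ (Fin n) →ₗ[ℂ] EuclideanSpace ℂ (Fin n))
    (hS : S.IsSymmetric) (x : EuclideanSpace ℂ (Fin n))
    (hx : x ∈ ⨆ c ∈ Set.Ici (0:ℝ), Module.End.eigenspace S (c : ℂ)) :
    0 ≤ (⟪x, S x⟫_ℂ).re := by
  have hn : Module.finrank ℂ (EuclideanSpace ℂ (Fin n)) = n := finrank_euclideanSpace_fin
  set b := hS.eigenvectorBasis hn with hbdef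
  set μ := hS.eigenvalues hn with hμdef
  have hb : ∀ i, S (b i) = (μ i : ℂ) • b i := hS.apply_eigenvectorBasis hn
  have hzero : ∀ i, μ i < 0 → ⟪b i, x⟫_ℂ = 0 := by
    intro i hi
    refine esg_inner_zero_of_biSup _ _ _ _ ?_ hx
    intro c hc y hy
    have hy' : S y = (c : ℂ) • y := Module.End.mem_eigenspace_iff.mp hy
    have h1 : ⟪S (b i), y⟫_ℂ = ⟪b i, S y⟫_ℂ := hS _ _
    rw [hb i, hy', inner_smul_left, inner_smul_right, Complex.conj_ofReal] at h1
    have h2 : ((μ i : ℂ) - (c : ℂ)) * ⟪b i, y⟫_ℂ = 0 := by rw [sub_mul, h1]; ring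
    rcases mul_eq_zero.mp h2 with h | h
    · exfalso
      have h3 : μ i = c := by exact_mod_cast sub_eq_zero.mp h
      have := Set.mem_Ici.mp hc; linarith
    · exact h
  -- Parseval
  have hpars : ⟪x, S x⟫_ℂ = ∑ i, (starRingEnd ℂ) (b.repr x i) * ((μ i : ℂ) * b.repr x i) := by
    rw [← b.repr.inner_map_map x (S x)]
    rw [PiLp.inner_apply]
    refine Finset.sum_congr rfl fun i _ => ?_
    rw [hS.eigenvectorBasis_apply_self_apply hn x i, RCLike.inner_apply]
    simp only [← hbdef, ← hμdef]
    exact mul_comm _ _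
  rw [hpars, Complex.re_sum]
  refine Finset.sum_nonneg fun i _ => ?_
  have hrepr : b.repr x i = ⟪b i, x⟫_ℂ := b.repr_apply_apply x i
  rcases lt_or_ge (μ i) 0 with h | h
  · rw [hrepr, hzero i h]; simp
  · have : (starRingEnd ℂ) (b.repr x i) * ((μ i : ℂ) * b.repr x i)
        = ((μ i * Complex.normSq (b.repr x i) : ℝ) : ℂ) := by
      push_cast [Complex.normSq_eq_conj_mul_self]
      ring
    rw [this, Complex.ofReal_re]
    exact mul_nonneg h (Complex.normSq_nonneg _)

set_option maxHeartbeats 1600000 in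
/-- **Effective Spectral Gap Lemma.**  Let `PA` and `PB` be orthogonal projectors
(self-adjoint idempotents) on a finite-dimensional complex inner product space,
`R_A = 2PA − I`, `R_B = 2PB − I` the reflections about their images, `Θ ≥ 0`, and
`PΘ` the orthogonal projection onto the span `EΘ` of the eigenvectors of `R_B R_A`
with eigenvalues `e^{iθ}`, `|θ| ≤ Θ`.  Then `PA w = 0` implies
`‖PΘ (PB w)‖ ≤ (Θ/2)‖w‖`. -/
theorem effective_spectral_gap_lemma
    (n : ℕ)
    (PA PB : EuclideanSpace ℂ (Fin n) →ₗ[ℂ] EuclideanSpace ℂ (Fin n))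
    (hAidem : PA ∘ₗ PA = PA) (hAsym : LinearMap.IsSymmetric PA)
    (hBidem : PB ∘ₗ PB = PB) (hBsym : LinearMap.IsSymmetric PB)
    (RA RB : EuclideanSpace ℂ (Fin n) →ₗ[ℂ] EuclideanSpace ℂ (Fin n))
    (hRA : RA = (2 : ℂ) • PA - LinearMap.id)
    (hRB : RB = (2 : ℂ) • PB - LinearMap.id)
    (Θ : ℝ) (hΘ : 0 ≤ Θ)
    (EΘ : Submodule ℂ (EuclideanSpace ℂ (Fin n)))
    (hEΘ : EΘ = ⨆ θ ∈ Set.Icc (-Θ) Θ,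
      Module.End.eigenspace (RB ∘ₗ RA) (Complex.exp (θ * Complex.I)))
    (w : EuclideanSpace ℂ (Fin n)) (hw : PA w = 0) :
    ‖(EΘ.orthogonalProjection (PB w) : EuclideanSpace ℂ (Fin n))‖ ≤ (Θ / 2) * ‖w‖ := by
  set U : (EuclideanSpace ℂ (Fin n)) →ₗ[ℂ] (EuclideanSpace ℂ (Fin n)) := RB ∘ₗ RA with hU
  -- basic algebra
  have hA2 : ∀ x, PA (PA x) = PA x := fun x => congrFun (congrArg DFunLike.coe hAidem) x
  have hB2 : ∀ x, PB (PB x) = PB x := fun x => congrFun (congrArg DFunLike.coe hBidem) x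
  have hRAapp : ∀ x, RA x = (2:ℂ) • PA x - x := by intro x; rw [hRA]; rfl
  have hRBapp : ∀ x, RB x = (2:ℂ) • PB x - x := by intro x; rw [hRB]; rfl
  have hRA2 : ∀ x, RA (RA x) = x := by
    intro x; simp only [hRAapp, map_sub, map_smul, hA2, smul_sub, smul_smul]; module
  have hRB2 : ∀ x, RB (RB x) = x := by
    intro x; simp only [hRBapp, map_sub, map_smul, hB2, smul_sub, smul_smul]; module
  have hRAsym : LinearMap.IsSymmetric RA := by
    intro x y
    simp only [hRAapp, inner_sub_left, inner_sub_right, inner_smul_left, inner_smul_right,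
      hAsym x y, Complex.conj_ofNat]
  have hRBsym : LinearMap.IsSymmetric RB := by
    intro x y
    simp only [hRBapp, inner_sub_left, inner_sub_right, inner_smul_left, inner_smul_right,
      hBsym x y, Complex.conj_ofNat]
  have hadj : ∀ x y : (EuclideanSpace ℂ (Fin n)), ⟪U x, y⟫_ℂ = ⟪x, RA (RB y)⟫_ℂ := by
    intro x y
    show ⟪RB (RA x), y⟫_ℂ = _
    rw [hRBsym, hRAsym]
  have hadj' : ∀ x y : (EuclideanSpace ℂ (Fin n)), ⟪x, U y⟫_ℂ = ⟪RA (RB x), y⟫_ℂ := by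
    intro x y
    show _ = ⟪RA (RB x), y⟫_ℂ
    rw [hRAsym, hRBsym]; rfl
  have hUnorm : ∀ x : (EuclideanSpace ℂ (Fin n)), ‖U x‖ = ‖x‖ := by
    intro x
    have : ⟪U x, U x⟫_ℂ = ⟪x, x⟫_ℂ := by
      rw [hadj]
      show _ = ⟪x, x⟫_ℂ
      rw [show RA (RB (U x)) = x by show RA (RB (RB (RA x))) = x; rw [hRB2, hRA2]]
    rw [inner_self_eq_norm_sq_to_K, inner_self_eq_norm_sq_to_K] at this
    have h4 : ‖U x‖^2 = ‖x‖^2 := by exact_mod_cast this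
    nlinarith [norm_nonneg (U x), norm_nonneg x]
  -- the symmetric comparison operator
  set S : (EuclideanSpace ℂ (Fin n)) →ₗ[ℂ] (EuclideanSpace ℂ (Fin n)) := (((Θ^2 - 2 : ℝ) : ℂ)) • LinearMap.id + U + RA ∘ₗ RB with hSdef
  have hSapp : ∀ x : (EuclideanSpace ℂ (Fin n)), S x = ((Θ^2 - 2 : ℝ) : ℂ) • x + U x + RA (RB x) := fun x => rfl
  have hSsym : LinearMap.IsSymmetric S := by
    intro x y
    simp only [hSapp, inner_add_left, inner_add_right, inner_smul_left, inner_smul_right,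
      Complex.conj_ofReal]
    rw [hadj, hadj']; ring
  have heig : ∀ θ ∈ Set.Icc (-Θ) Θ,
      Module.End.eigenspace U (Complex.exp (θ * Complex.I)) ≤
        Module.End.eigenspace S ((Θ^2 - 2 + 2 * Real.cos θ : ℝ) : ℂ) := by
    intro θ hθ x hx
    rw [Module.End.mem_eigenspace_iff] at hx ⊢
    have hinv : RA (RB x) = Complex.exp (-θ * Complex.I) • x := by
      have h5 : RA (RB (U x)) = x := by
        show RA (RB (RB (RA x))) = x; rw [hRB2, hRA2]
      rw [hx, map_smul, map_smul] at h5
      have hne : Complex.exp (θ * Complex.I) ≠ 0 := Complex.exp_ne_zero _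
      have := congrArg (fun z => (Complex.exp (θ * Complex.I))⁻¹ • z) h5
      simp only [smul_smul, inv_mul_cancel₀ hne, one_smul] at this
      rw [this, ← Complex.exp_neg]
      ring_nf
    rw [hSapp, hx, hinv]
    have hsum : Complex.exp ((θ:ℂ) * Complex.I) + Complex.exp ((-θ:ℂ) * Complex.I)
        = ((2 * Real.cos θ : ℝ) : ℂ) := by
      rw [Complex.exp_mul_I, Complex.exp_mul_I, Complex.cos_neg, Complex.sin_neg]
      push_cast [Complex.ofReal_cos]
      ring
    rw [← add_smul, ← add_smul]
    congr 1
    push_cast [Complex.ofReal_cos] at hsum ⊢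
    rw [add_assoc, hsum]
  have hEV : EΘ ≤ ⨆ c ∈ Set.Ici (0:ℝ), Module.End.eigenspace S (c : ℂ) := by
    rw [hEΘ]
    refine iSup₂_le fun θ hθ => ?_
    have hnn : (0:ℝ) ≤ Θ^2 - 2 + 2 * Real.cos θ := by
      have h1 := Real.one_sub_sq_div_two_le_cos (x := θ)
      have h2 : θ^2 ≤ Θ^2 := sq_le_sq' (by linarith [hθ.1]) hθ.2
      nlinarith
    exact le_trans (heig θ hθ) (le_iSup₂_of_le (Θ^2 - 2 + 2 * Real.cos θ) hnn le_rfl)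
  have hkey : ∀ x ∈ EΘ, ‖x - U x‖ ≤ Θ * ‖x‖ := by
    intro x hxE
    have hp := esg_pos_of_mem_iSup_nonneg S hSsym x (hEV hxE)
    set r : ℝ := (⟪x, U x⟫_ℂ).re with hrdef
    have hxx : (⟪x, x⟫_ℂ).re = ‖x‖^2 := by
      rw [inner_self_eq_norm_sq_to_K]; norm_cast
    have hS1 : ⟪x, S x⟫_ℂ = ((Θ^2-2:ℝ):ℂ) * ⟪x,x⟫_ℂ + ⟪x, U x⟫_ℂ + ⟪U x, x⟫_ℂ := by
      rw [hSapp, inner_add_right, inner_add_right, inner_smul_right, ← hadj x x]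
    have hre : (⟪x, S x⟫_ℂ).re = (Θ^2-2) * ‖x‖^2 + 2 * r := by
      have hsym2 : (⟪U x, x⟫_ℂ).re = r := by
        rw [← inner_conj_symm (U x) x, Complex.conj_re]
      rw [hS1]
      simp only [Complex.add_re, Complex.re_ofReal_mul, hxx, hsym2]
      ring
    have hns : ‖x - U x‖^2 = ‖x‖^2 - 2 * r + ‖U x‖^2 := by
      have h0 := @norm_sub_sq ℂ _ _ _ _ x (U x)
      simpa only [RCLike.re_to_complex] using h0
    rw [hUnorm x] at hns
    rw [hre] at hp
    have hsq : ‖x - U x‖^2 ≤ (Θ * ‖x‖)^2 := by nlinarith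
    nlinarith [norm_nonneg (x - U x), mul_nonneg hΘ (norm_nonneg x)]
  -- invariance of EΘ under U and its adjoint
  have hinv2 : ∀ x ∈ EΘ, U x ∈ EΘ ∧ RA (RB x) ∈ EΘ := by
    intro x hx
    rw [hEΘ] at hx
    have hadd : ∀ a b : (EuclideanSpace ℂ (Fin n)), (U a ∈ EΘ ∧ RA (RB a) ∈ EΘ) → (U b ∈ EΘ ∧ RA (RB b) ∈ EΘ) →
        (U (a + b) ∈ EΘ ∧ RA (RB (a + b)) ∈ EΘ) := by
      intro a b ha hb
      refine ⟨?_, ?_⟩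
      · rw [map_add]; exact Submodule.add_mem _ ha.1 hb.1
      · rw [map_add, map_add]; exact Submodule.add_mem _ ha.2 hb.2
    have hzero : U (0:(EuclideanSpace ℂ (Fin n))) ∈ EΘ ∧ RA (RB (0:(EuclideanSpace ℂ (Fin n)))) ∈ EΘ := by
      simp only [map_zero]; exact ⟨Submodule.zero_mem _, Submodule.zero_mem _⟩
    refine Submodule.iSup_induction _ (motive := fun z => U z ∈ EΘ ∧ RA (RB z) ∈ EΘ) hx ?_ hzero hadd
    intro θ z hz
    refine Submodule.iSup_induction _ (motive := fun z => U z ∈ EΘ ∧ RA (RB z) ∈ EΘ) hz ?_ hzero hadd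
    intro hθ y hy
    have hymem : y ∈ EΘ := by
      rw [hEΘ]; exact Submodule.mem_iSup_of_mem θ (Submodule.mem_iSup_of_mem hθ hy)
    have hy' : U y = Complex.exp (θ * Complex.I) • y := Module.End.mem_eigenspace_iff.mp hy
    constructor
    · rw [hy']; exact Submodule.smul_mem _ _ hymem
    · have h5 : RA (RB (U y)) = y := by
        show RA (RB (RB (RA y))) = y; rw [hRB2, hRA2]
      rw [hy', map_smul, map_smul] at h5
      have hne : Complex.exp ((θ:ℂ)*Complex.I) ≠ 0 := Complex.exp_ne_zero _
      have h6 := congrArg (fun z => (Complex.exp ((θ:ℂ)*Complex.I))⁻¹ • z) h5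
      simp only [smul_smul, inv_mul_cancel₀ hne, one_smul] at h6
      rw [h6]; exact Submodule.smul_mem _ _ hymem
  have horth : ∀ y, y ∈ EΘᗮ → U y ∈ EΘᗮ := by
    intro y hy
    rw [Submodule.mem_orthogonal] at hy ⊢
    intro u hu
    rw [hadj' u y]
    exact hy _ (hinv2 u hu).2
  have hcomm : ∀ v : (EuclideanSpace ℂ (Fin n)),
      (EΘ.orthogonalProjection (U v) : (EuclideanSpace ℂ (Fin n))) = U (EΘ.orthogonalProjection v : (EuclideanSpace ℂ (Fin n))) := by
    intro v
    have hdecomp : U v = U (EΘ.orthogonalProjection v : (EuclideanSpace ℂ (Fin n)))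
        + U (v - (EΘ.orthogonalProjection v : (EuclideanSpace ℂ (Fin n)))) := by
      rw [← map_add]; congr 1; abel
    rw [hdecomp, map_add]
    have h1 : (EΘ.orthogonalProjection (U (EΘ.orthogonalProjection v : (EuclideanSpace ℂ (Fin n)))) : (EuclideanSpace ℂ (Fin n)))
        = U (EΘ.orthogonalProjection v : (EuclideanSpace ℂ (Fin n))) :=
      Submodule.starProjection_eq_self_iff.mpr
        ((hinv2 _ (EΘ.orthogonalProjection v).2).1)
    have h2 : EΘ.orthogonalProjection (U (v - (EΘ.orthogonalProjection v : (EuclideanSpace ℂ (Fin n))))) = 0 :=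
      Submodule.orthogonalProjectionOnto_apply_of_mem_orthogonal
        (horth _ (Submodule.sub_starProjection_mem_orthogonal v))
    rw [Submodule.coe_add, h1, h2]
    simp
  -- final computation
  have hRAw : RA w = -w := by rw [hRAapp, hw]; simp
  have hUw : U w = -(RB w) := by show RB (RA w) = _; rw [hRAw, map_neg]
  have hPBw : PB w = (2⁻¹ : ℂ) • (w - U w) := by
    rw [hUw, hRBapp w]
    module
  have hfin : (EΘ.orthogonalProjection (PB w) : (EuclideanSpace ℂ (Fin n))) = (2⁻¹:ℂ) •
      ((EΘ.orthogonalProjection w : (EuclideanSpace ℂ (Fin n))) - U (EΘ.orthogonalProjection w : (EuclideanSpace ℂ (Fin n)))) := by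
    rw [hPBw, map_smul, map_sub]
    rw [Submodule.coe_smul, Submodule.coe_sub]
    rw [hcomm w]
  rw [hfin, norm_smul]
  have hhalf : ‖(2⁻¹:ℂ)‖ = 1/2 := by
    rw [norm_inv]; norm_num
  rw [hhalf]
  have hk := hkey _ (EΘ.orthogonalProjection w).2
  have hle : ‖(EΘ.orthogonalProjection w : (EuclideanSpace ℂ (Fin n)))‖ ≤ ‖w‖ := by
    have h1 := (EΘ.orthogonalProjection).le_opNorm w
    have h2 := Submodule.orthogonalProjectionOnto_norm_le EΘ
    calc ‖(EΘ.orthogonalProjection w : (EuclideanSpace ℂ (Fin n)))‖ = ‖EΘ.orthogonalProjection w‖ := rfl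
      _ ≤ ‖EΘ.orthogonalProjection‖ * ‖w‖ := h1
      _ ≤ 1 * ‖w‖ := by gcongr
      _ = ‖w‖ := one_mul _
  calc 1/2 * ‖(EΘ.orthogonalProjection w : (EuclideanSpace ℂ (Fin n))) - U (EΘ.orthogonalProjection w : (EuclideanSpace ℂ (Fin n)))‖
      ≤ 1/2 * (Θ * ‖(EΘ.orthogonalProjection w : (EuclideanSpace ℂ (Fin n)))‖) := by linarith
    _ ≤ 1/2 * (Θ * ‖w‖) := by
        have := mul_le_mul_of_nonneg_left hle hΘ
        linarith
    _ = Θ / 2 * ‖w‖ := by ring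
end

section
/- With the setup of the quantum walk: G = (V,E) bipartite with parts A and B, edge weights w_e, initial distribution σ supported on A with support S disjoint from the marked set M ≠ ∅, and for each unmarked u the vector ψ_u = √(σ_u/(C₁R))|u⟩ + Σ_{uv∈E} √(w_{uv})|uv⟩ in the space spanned by {|u⟩ : u ∈ S} ∪ {|e⟩ : e ∈ E}. If p is a flow from σ to M with energy at most R, then the vector φ = √(C₁R) Σ_{u∈S} √(σ_u)|u⟩ − Σ_{e∈E} (p_e/√(w_e))|e⟩ (with each edge e oriented from A to B) is orthogonal to ψ_u for every unmarked vertex u. -/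
/-- Quantum walk setup: `G` bipartite with parts `A`, `B` (weights oriented from
`A` to `B`: `wt a b > 0` only if `a ∈ A` and `b ∈ B`), initial distribution `σ`
with support `S ⊆ A` disjoint from the nonempty marked set `M`, and `p` a flow
from `σ` to `M` of energy at most `R`.  Then the vector
`φ = √(C₁R) Σ_{u∈S} √(σ_u)|u⟩ − Σ_{e∈E} (p_e/√(w_e))|e⟩` is orthogonal to
`ψ_u = √(σ_u/(C₁R))|u⟩ + Σ_{uv∈E} √(w_{uv})|uv⟩` for every unmarked vertex `u`.
The conclusion writes out the inner product `⟨φ, ψ_u⟩` in the orthonormal basis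
`{|u⟩ : u ∈ S} ∪ {|e⟩ : e ∈ E}`: the vertex term plus the terms of the edges
incident to `u` (edges `u→B` if `u ∈ A`, edges `A→u` if `u ∈ B`). -/
theorem flow_vector_orthogonal_to_walk_vectors
    {V : Type*} [Fintype V] [DecidableEq V]
    (A B : Set V) [DecidablePred (· ∈ A)] [DecidablePred (· ∈ B)]
    (hdisjAB : A ∩ B = ∅) (hcover : A ∪ B = Set.univ)
    (wt : V → V → ℝ) (hnonneg : ∀ u v, 0 ≤ wt u v)
    (hbip : ∀ a b, 0 < wt a b → a ∈ A ∧ b ∈ B)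
    (σ : V → ℝ) (hσnonneg : ∀ u, 0 ≤ σ u) (hσsum : ∑ u, σ u = 1)
    (hσA : ∀ u, σ u ≠ 0 → u ∈ A)
    (M : Set V) (hM : M.Nonempty) (hSM : ∀ u, σ u ≠ 0 → u ∉ M)
    (C₁ R : ℝ) (hC₁ : 0 < C₁) (hR : 0 < R)
    (p : V → V → ℝ)
    (hanti : ∀ u v, p v u = -p u v)
    (hsupp : ∀ u v, p u v ≠ 0 → 0 < wt u v ∨ 0 < wt v u)
    (hcons : ∀ u ∉ M, ∑ v, p u v = σ u)
    (henergy : ∑ u, ∑ v, (p u v) ^ 2 / wt u v ≤ R) :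
    ∀ u ∉ M,
      (Real.sqrt (C₁ * R) * Real.sqrt (σ u)) * Real.sqrt (σ u / (C₁ * R))
        + ∑ v, (if v ∈ B then (-(p u v) / Real.sqrt (wt u v)) * Real.sqrt (wt u v) else 0)
        + ∑ v, (if v ∈ A then (-(p v u) / Real.sqrt (wt v u)) * Real.sqrt (wt v u) else 0)
      = 0 := by

  intro u huM
  have hCR : 0 < C₁ * R := mul_pos hC₁ hR
  have hdisj : ∀ x, x ∈ A → x ∈ B → False := fun x ha hb =>
    Set.eq_empty_iff_forall_notMem.mp hdisjAB x ⟨ha, hb⟩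
  have hv : (Real.sqrt (C₁ * R) * Real.sqrt (σ u)) * Real.sqrt (σ u / (C₁ * R)) = σ u := by
    rw [mul_comm (Real.sqrt (C₁ * R)), mul_assoc, ← Real.sqrt_mul hCR.le,
      mul_div_cancel₀ _ (ne_of_gt hCR), Real.mul_self_sqrt (hσnonneg u)]
  rw [hv]
  by_cases huA : u ∈ A
  · have h1 : ∀ v, (if v ∈ B then (-(p u v) / Real.sqrt (wt u v)) * Real.sqrt (wt u v) else 0)
        = -(p u v) := by
      intro v
      by_cases hvB : v ∈ B
      · rw [if_pos hvB]
        rcases (hnonneg u v).lt_or_eq with h | h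
        · exact div_mul_cancel₀ _ (ne_of_gt (Real.sqrt_pos.mpr h))
        · have hp : p u v = 0 := by
            by_contra hp
            rcases hsupp u v hp with h' | h'
            · exact absurd h' (by rw [← h]; exact lt_irrefl 0)
            · exact hdisj v (hbip v u h').1 hvB
          simp [hp]
      · rw [if_neg hvB]
        have hp : p u v = 0 := by
          by_contra hp
          rcases hsupp u v hp with h' | h'
          · exact hvB (hbip u v h').2
          · exact hdisj u huA (hbip v u h').2
        simp [hp]
    have h2 : ∀ v, (if v ∈ A then (-(p v u) / Real.sqrt (wt v u)) * Real.sqrt (wt v u) else 0)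
        = 0 := by
      intro v
      by_cases hvA : v ∈ A
      · rw [if_pos hvA]
        have hp : p v u = 0 := by
          by_contra hp
          rcases hsupp v u hp with h' | h'
          · exact hdisj u huA (hbip v u h').2
          · exact hdisj v hvA (hbip u v h').2
        simp [hp]
      · rw [if_neg hvA]
    simp only [h1, h2, Finset.sum_const_zero, add_zero, Finset.sum_neg_distrib]
    rw [hcons u huM]
    ring
  · have huB : u ∈ B := by
      have := Set.eq_univ_iff_forall.mp hcover u
      rcases this with h | h
      · exact absurd h huA
      · exact h
    have hσ0 : σ u = 0 := by
      by_contra h; exact huA (hσA u h)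
    have h1 : ∀ v, (if v ∈ B then (-(p u v) / Real.sqrt (wt u v)) * Real.sqrt (wt u v) else 0)
        = 0 := by
      intro v
      by_cases hvB : v ∈ B
      · rw [if_pos hvB]
        have hp : p u v = 0 := by
          by_contra hp
          rcases hsupp u v hp with h' | h'
          · exact hdisj u (hbip u v h').1 huB
          · exact hdisj v (hbip v u h').1 hvB
        simp [hp]
      · rw [if_neg hvB]
    have h2 : ∀ v, (if v ∈ A then (-(p v u) / Real.sqrt (wt v u)) * Real.sqrt (wt v u) else 0)
        = p u v := by
      intro v
      by_cases hvA : v ∈ A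
      · rw [if_pos hvA]
        rcases (hnonneg v u).lt_or_eq with h | h
        · rw [div_mul_cancel₀ _ (ne_of_gt (Real.sqrt_pos.mpr h)), hanti u v, neg_neg]
        · have hp : p v u = 0 := by
            by_contra hp
            rcases hsupp v u hp with h' | h'
            · exact absurd h' (by rw [← h]; exact lt_irrefl 0)
            · exact hdisj u (hbip u v h').1 huB
          have hpu : p u v = 0 := by rw [hanti v u, hp, neg_zero]
          simp [hp, hpu]
      · rw [if_neg hvA]
        have hp : p u v = 0 := by
          by_contra hp
          rcases hsupp u v hp with h' | h'
          · exact hdisj u (hbip u v h').1 huB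
          · exact hvA (hbip v u h').1
        simp [hp]
    simp only [h1, h2, Finset.sum_const_zero, add_zero, zero_add]
    rw [hcons u huM, hσ0]
    ring
end

section
/- Let G be a finite bipartite graph with parts A and B, edge weights w_e > 0, and total weight W = Σ_e w_e. Let σ be a probability distribution supported on S ⊆ A, C₁ ≥ 1, R > 0, and for every vertex u define ψ_u as in the quantum walk (with no marked vertices: every u is unmarked). Let w = √(C₁R)[Σ_{u∈S} √(σ_u/(C₁R))|u⟩ + Σ_{e∈E} √(w_e)|e⟩]. Let Π_A (resp. Π_B) be the orthogonal projection onto the orthogonal complement of span{ψ_u : u ∈ A} (resp. span{ψ_u : u ∈ B}) within ⊕_{u∈A} H_u (resp. ⊕_{u∈B} H_u), extended appropriately. Then Π_A w = 0 and Π_B w = ς, where ς = Σ_{u∈S} √(σ_u)|u⟩. Moreover ‖w‖² = 1 + C₁ R W. -/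
noncomputable section

variable {V : Type*} [Fintype V] [DecidableEq V]

/-- A vector of the walk space, given by its coordinates in the orthonormal basis
indexed by vertices (`Sum.inl`) and oriented edges (`Sum.inr`). -/
def walkVec (f : V ⊕ (V × V) → ℝ) : EuclideanSpace ℝ (V ⊕ (V × V)) :=
  (WithLp.equiv 2 (V ⊕ (V × V) → ℝ)).symm f

/-- The local reflection vector `ψ_u = √(σ_u/(C₁R))|u⟩ + Σ_{uv∈E} √(w_{uv})|uv⟩`
(no marked vertices; the edge `e` contributes to `ψ_u` iff `u` is an endpoint of
`e`; coordinates of non-edges vanish since their weight is `0`). -/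
def walkPsi (wt : V → V → ℝ) (σ : V → ℝ) (C₁ R : ℝ) (u : V) :
    EuclideanSpace ℝ (V ⊕ (V × V)) :=
  walkVec (Sum.elim
    (fun v => if v = u then Real.sqrt (σ u / (C₁ * R)) else 0)
    (fun e => if e.1 = u ∨ e.2 = u then Real.sqrt (wt e.1 e.2) else 0))

/-- `w = √(C₁R)[Σ_{u∈S} √(σ_u/(C₁R))|u⟩ + Σ_{e∈E} √(w_e)|e⟩]`. -/
def walkW (wt : V → V → ℝ) (σ : V → ℝ) (C₁ R : ℝ) :
    EuclideanSpace ℝ (V ⊕ (V × V)) :=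
  walkVec (Sum.elim
    (fun v => Real.sqrt (C₁ * R) * Real.sqrt (σ v / (C₁ * R)))
    (fun e => Real.sqrt (C₁ * R) * Real.sqrt (wt e.1 e.2)))

/-- `ς = Σ_{u∈S} √(σ_u)|u⟩`. -/
def walkSigma (σ : V → ℝ) : EuclideanSpace ℝ (V ⊕ (V × V)) :=
  walkVec (Sum.elim (fun v => Real.sqrt (σ v)) (fun _ => 0))

/-- For a bipartite graph with parts `A`, `B` (weights oriented `A → B`),
probability distribution `σ` supported on `S ⊆ A`, `C₁ ≥ 1`, `R > 0` and
`W = Σ_e w_e`: with `Π_A`, `Π_B` the orthogonal projections onto the orthogonal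
complements of `span{ψ_u : u ∈ A}` and `span{ψ_u : u ∈ B}`, the vector `w`
satisfies `Π_A w = 0`, `Π_B w = ς` and `‖w‖² = 1 + C₁RW`. -/
theorem walk_witness_vector_properties
    (A B : Set V) (hdisjAB : A ∩ B = ∅) (hcover : A ∪ B = Set.univ)
    (wt : V → V → ℝ) (hnonneg : ∀ u v, 0 ≤ wt u v)
    (hbip : ∀ a b, 0 < wt a b → a ∈ A ∧ b ∈ B)
    (W : ℝ) (hW : W = ∑ u, ∑ v, wt u v)
    (σ : V → ℝ) (hσnonneg : ∀ u, 0 ≤ σ u) (hσsum : ∑ u, σ u = 1)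
    (hσA : ∀ u, σ u ≠ 0 → u ∈ A)
    (C₁ R : ℝ) (hC₁ : 1 ≤ C₁) (hR : 0 < R)
    (KA KB : Submodule ℝ (EuclideanSpace ℝ (V ⊕ (V × V))))
    (hKA : KA = Submodule.span ℝ ((walkPsi wt σ C₁ R) '' A))
    (hKB : KB = Submodule.span ℝ ((walkPsi wt σ C₁ R) '' B)) :
    ((Submodule.orthogonalProjection KAᗮ (walkW wt σ C₁ R) : EuclideanSpace ℝ (V ⊕ (V × V))) = 0)
    ∧ ((Submodule.orthogonalProjection KBᗮ (walkW wt σ C₁ R) : EuclideanSpace ℝ (V ⊕ (V × V)))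
        = walkSigma σ)
    ∧ ‖walkW wt σ C₁ R‖ ^ 2 = 1 + C₁ * R * W := by
  classical
  have hCR : 0 < C₁ * R := mul_pos (lt_of_lt_of_le one_pos hC₁) hR
  have hAB : ∀ u, u ∈ A → u ∉ B := by
    intro u hA hB
    have : u ∈ A ∩ B := ⟨hA, hB⟩
    rw [hdisjAB] at this; exact this
  have hσB : ∀ u, u ∈ B → σ u = 0 := by
    intro u hu
    by_contra h
    exact hAB u (hσA u h) hu
  have hsq : ∀ x : ℝ, Real.sqrt (C₁ * R) * Real.sqrt (x / (C₁ * R)) = Real.sqrt x := by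
    intro x
    rw [← Real.sqrt_mul hCR.le]
    congr 1
    field_simp
  -- w = ∑_{u ∈ A} √(C₁R) • ψ_u
  have hwA : walkW wt σ C₁ R
      = ∑ u : V, if u ∈ A then Real.sqrt (C₁ * R) • walkPsi wt σ C₁ R u else 0 := by
    ext i
    rw [WithLp.ofLp_sum, Finset.sum_apply i Finset.univ _]
    cases i with
    | inl v =>
      rw [Finset.sum_eq_single v]
      · by_cases hv : v ∈ A
        · simp [walkW, walkPsi, walkVec, hv]
        · have : σ v = 0 := by
            by_contra h; exact hv (hσA v h)
          simp [walkW, walkPsi, walkVec, hv, this]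
      · intro u _ hu
        by_cases huA : u ∈ A <;>
          simp [walkPsi, walkVec, huA, (Ne.symm hu : v ≠ u)]
      · intro h; exact absurd (Finset.mem_univ v) h
    | inr e =>
      by_cases hwe : 0 < wt e.1 e.2
      · obtain ⟨h1, h2⟩ := hbip e.1 e.2 hwe
        rw [Finset.sum_eq_single e.1]
        · simp [walkW, walkPsi, walkVec, h1]
        · intro u _ hu
          by_cases huA : u ∈ A
          · have h1' : ¬ e.1 = u := fun h => hu h.symm
            have h2' : ¬ e.2 = u := fun h => hAB u huA (h ▸ h2)
            simp [walkPsi, walkVec, huA, h1', h2']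
          · simp [huA]
        · intro h; exact absurd (Finset.mem_univ e.1) h
      · have hz : wt e.1 e.2 = 0 := le_antisymm (not_lt.1 hwe) (hnonneg _ _)
        have : ∀ u : V,
            (if u ∈ A then Real.sqrt (C₁ * R) • walkPsi wt σ C₁ R u else 0) (Sum.inr e)
              = 0 := by
          intro u
          by_cases huA : u ∈ A <;> simp [walkPsi, walkVec, huA, hz]
        rw [Finset.sum_congr rfl fun u _ => this u, Finset.sum_const_zero]
        simp [walkW, walkVec, hz]
  -- w - ς = ∑_{u ∈ B} √(C₁R) • ψ_u
  have hwB : walkW wt σ C₁ R - walkSigma σ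
      = ∑ u : V, if u ∈ B then Real.sqrt (C₁ * R) • walkPsi wt σ C₁ R u else 0 := by
    ext i
    rw [WithLp.ofLp_sum, Finset.sum_apply i Finset.univ _]
    cases i with
    | inl v =>
      have : ∀ u : V,
          (if u ∈ B then Real.sqrt (C₁ * R) • walkPsi wt σ C₁ R u else 0) (Sum.inl v)
            = 0 := by
        intro u
        by_cases huB : u ∈ B
        · by_cases hvu : v = u
          · subst hvu
            simp [walkPsi, walkVec, huB, hσB v huB]
          · simp [walkPsi, walkVec, huB, hvu]
        · simp [huB]
      rw [Finset.sum_congr rfl fun u _ => this u, Finset.sum_const_zero]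
      show Real.sqrt (C₁ * R) * Real.sqrt (σ v / (C₁ * R)) - Real.sqrt (σ v) = 0
      rw [hsq, sub_self]
    | inr e =>
      by_cases hwe : 0 < wt e.1 e.2
      · obtain ⟨h1, h2⟩ := hbip e.1 e.2 hwe
        rw [Finset.sum_eq_single e.2]
        · show Real.sqrt (C₁ * R) * Real.sqrt (wt e.1 e.2) - 0 = _
          simp [walkPsi, walkVec, h2]
        · intro u _ hu
          by_cases huB : u ∈ B
          · have h2' : ¬ e.2 = u := fun h => hu h.symm
            have h1' : ¬ e.1 = u := fun h => hAB u (h ▸ h1) huB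
            simp [walkPsi, walkVec, huB, h1', h2']
          · simp [huB]
        · intro h; exact absurd (Finset.mem_univ e.2) h
      · have hz : wt e.1 e.2 = 0 := le_antisymm (not_lt.1 hwe) (hnonneg _ _)
        have : ∀ u : V,
            (if u ∈ B then Real.sqrt (C₁ * R) • walkPsi wt σ C₁ R u else 0) (Sum.inr e)
              = 0 := by
          intro u
          by_cases huB : u ∈ B <;> simp [walkPsi, walkVec, huB, hz]
        rw [Finset.sum_congr rfl fun u _ => this u, Finset.sum_const_zero]
        show Real.sqrt (C₁ * R) * Real.sqrt (wt e.1 e.2) - 0 = 0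
        simp [hz]
  -- membership facts
  have hwKA : walkW wt σ C₁ R ∈ KA := by
    rw [hwA, hKA]
    refine Submodule.sum_mem _ fun u _ => ?_
    by_cases hu : u ∈ A
    · simp only [hu, if_true]
      exact Submodule.smul_mem _ _ (Submodule.subset_span ⟨u, hu, rfl⟩)
    · simp only [hu, if_false]; exact Submodule.zero_mem _
  have hwsKB : walkW wt σ C₁ R - walkSigma σ ∈ KB := by
    rw [hwB, hKB]
    refine Submodule.sum_mem _ fun u _ => ?_
    by_cases hu : u ∈ B
    · simp only [hu, if_true]
      exact Submodule.smul_mem _ _ (Submodule.subset_span ⟨u, hu, rfl⟩)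
    · simp only [hu, if_false]; exact Submodule.zero_mem _
  have hsKB : walkSigma σ ∈ KBᗮ := by
    rw [Submodule.mem_orthogonal, hKB]
    intro x hx
    refine Submodule.span_induction (p := fun x _ => (inner ℝ x (walkSigma σ) : ℝ) = 0) ?_ ?_ ?_ ?_ hx
    · rintro y ⟨u, hu, rfl⟩
      rw [PiLp.inner_apply]
      refine Finset.sum_eq_zero fun i _ => ?_
      cases i with
      | inl v =>
        by_cases hvu : v = u
        · subst hvu
          simp [walkPsi, walkSigma, walkVec, hσB v hu]
        · simp [walkPsi, walkVec, hvu]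
      | inr e => simp [walkSigma, walkVec]
    · simp
    · intro x y _ _ hx hy
      rw [inner_add_left, hx, hy, add_zero]
    · intro c x _ hx
      rw [real_inner_smul_left, hx, mul_zero]
  refine ⟨?_, ?_, ?_⟩
  · have : walkW wt σ C₁ R ∈ (KAᗮ)ᗮ := Submodule.le_orthogonal_orthogonal KA hwKA
    rw [Submodule.orthogonalProjectionOnto_apply_of_mem_orthogonal this]
    rfl
  · have h1 : walkW wt σ C₁ R - walkSigma σ ∈ (KBᗮ)ᗮ :=
      Submodule.le_orthogonal_orthogonal KB hwsKB
    have hdecomp : walkW wt σ C₁ R = walkSigma σ + (walkW wt σ C₁ R - walkSigma σ) := by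
      abel
    rw [hdecomp, map_add,
      Submodule.orthogonalProjectionOnto_apply_of_mem_orthogonal h1, add_zero]
    exact Submodule.starProjection_eq_self_iff.2 hsKB
  · have := real_inner_self_eq_norm_sq (walkW wt σ C₁ R)
    rw [← this, PiLp.inner_apply]
    rw [Fintype.sum_sum_type]
    have hA : ∀ v : V,
        (inner ℝ (walkW wt σ C₁ R (Sum.inl v)) (walkW wt σ C₁ R (Sum.inl v)) : ℝ) = σ v := by
      intro v
      show (Real.sqrt (C₁ * R) * Real.sqrt (σ v / (C₁ * R)))
          * (Real.sqrt (C₁ * R) * Real.sqrt (σ v / (C₁ * R))) = σ v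
      rw [hsq, Real.mul_self_sqrt (hσnonneg v)]
    have hB : ∀ e : V × V,
        (inner ℝ (walkW wt σ C₁ R (Sum.inr e)) (walkW wt σ C₁ R (Sum.inr e)) : ℝ)
          = C₁ * R * wt e.1 e.2 := by
      intro e
      show (Real.sqrt (C₁ * R) * Real.sqrt (wt e.1 e.2))
          * (Real.sqrt (C₁ * R) * Real.sqrt (wt e.1 e.2)) = C₁ * R * wt e.1 e.2
      rw [mul_mul_mul_comm, Real.mul_self_sqrt hCR.le, Real.mul_self_sqrt (hnonneg _ _)]
    rw [Finset.sum_congr rfl fun v _ => hA v, Finset.sum_congr rfl fun e _ => hB e,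
      hσsum, ← Finset.mul_sum, hW, Fintype.sum_prod_type]

end
end

section
/- In the quantum walk for k-distinctness: let V_0' ⊆ V_0 be the subsets disjoint from the unique k-collision {a_1,...,a_k}, define the flow p assigning value 1/|V_0'| to each edge from S ∈ V_i (i < k, S ∩ {a_1,...,a_k} = {a_1,...,a_i}) to S ∪ {a_{i+1}}, and 0 elsewhere, and let φ = √(C₁) Σ_{S∈V_0'} (1/|V_0'|)|S⟩ − Σ_{e∈E} p_e |e⟩. Then ‖φ‖² = (k + C₁)/|V_0'| and ⟨φ, ς⟩ = √(C₁/|V_0|), where ς = |V_0|^{-1/2} Σ_{S∈V_0} |S⟩. Consequently ⟨φ/‖φ‖, ς⟩ = √(C₁|V_0'| / ((k+C₁)|V_0|)). -/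
open scoped RealInnerProductSpace

/-- Overlap analysis of the flow vector in the `k`-distinctness walk.  `V₀' ⊆ V₀`
are the subsets disjoint from the unique `k`-collision; each `S ∈ V₀'` carries a
path of `k` edges (`P S`), pairwise edge-disjoint over distinct `S`; the flow
puts `1/|V₀'|` on each path edge.  With
`φ = √C₁ Σ_{S∈V₀'} (1/|V₀'|)|S⟩ − Σ_e p_e |e⟩` and
`ς = |V₀|^{-1/2} Σ_{S∈V₀} |S⟩` one has `‖φ‖² = (k+C₁)/|V₀'|`,
`⟨φ, ς⟩ = √(C₁/|V₀|)` and `⟨φ/‖φ‖, ς⟩ = √(C₁|V₀'|/((k+C₁)|V₀|))`. -/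
theorem kdist_flow_vector_overlap
    {Vert Edge : Type*} [Fintype Vert] [Fintype Edge] [DecidableEq Vert] [DecidableEq Edge]
    (k : ℕ) (hk : 1 ≤ k) (C₁ : ℝ) (hC₁ : 0 < C₁)
    (V₀ V₀' : Finset Vert) (hsub : V₀' ⊆ V₀) (hne : V₀'.Nonempty)
    (P : Vert → Finset Edge)
    (hPcard : ∀ S ∈ V₀', (P S).card = k)
    (hPdisj : ∀ S ∈ V₀', ∀ T ∈ V₀', S ≠ T → Disjoint (P S) (P T))
    (p : Edge → ℝ)
    (hp : ∀ e, p e = if ∃ S ∈ V₀', e ∈ P S then (1 : ℝ) / V₀'.card else 0)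
    (φ ς : EuclideanSpace ℝ (Vert ⊕ Edge))
    (hφ : φ = (WithLp.equiv 2 (Vert ⊕ Edge → ℝ)).symm (Sum.elim
      (fun S => if S ∈ V₀' then Real.sqrt C₁ / V₀'.card else 0)
      (fun e => -(p e))))
    (hς : ς = (WithLp.equiv 2 (Vert ⊕ Edge → ℝ)).symm (Sum.elim
      (fun S => if S ∈ V₀ then 1 / Real.sqrt V₀.card else 0)
      (fun _ => 0))) :
    ‖φ‖ ^ 2 = (k + C₁) / V₀'.card
    ∧ ⟪φ, ς⟫ = Real.sqrt (C₁ / V₀.card)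
    ∧ ⟪‖φ‖⁻¹ • φ, ς⟫ = Real.sqrt (C₁ * V₀'.card / ((k + C₁) * V₀.card)) := by
  have hm : (0:ℝ) < V₀'.card := by exact_mod_cast Finset.card_pos.mpr hne
  have hm0 : (V₀'.card:ℝ) ≠ 0 := hm.ne'
  have hV0 : (0:ℝ) < V₀.card := by exact_mod_cast Finset.card_pos.mpr (hne.mono hsub)
  have hkC : (0:ℝ) < k + C₁ := by positivity
  -- edge sum
  have hedge : ∑ e : Edge, p e * p e = (k : ℝ) / V₀'.card := by
    have hmem : ∀ e : Edge, (∃ S ∈ V₀', e ∈ P S) ↔ e ∈ V₀'.biUnion P := by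
      intro e; simp [Finset.mem_biUnion]
    have h1 : ∀ e, p e * p e =
        if e ∈ V₀'.biUnion P then (1:ℝ)/V₀'.card * (1/V₀'.card) else 0 := by
      intro e; by_cases h : e ∈ V₀'.biUnion P
      · rw [hp e, if_pos ((hmem e).2 h), if_pos h]
      · rw [hp e, if_neg (fun hh => h ((hmem e).1 hh)), if_neg h, mul_zero]
    rw [Finset.sum_congr rfl fun e _ => h1 e]
    rw [Finset.sum_ite_mem, Finset.univ_inter, Finset.sum_const,
      Finset.card_biUnion hPdisj, Finset.sum_congr rfl hPcard, Finset.sum_const,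
      smul_eq_mul, nsmul_eq_mul]
    push_cast
    field_simp
  have hvert : ∑ S : Vert, (if S ∈ V₀' then Real.sqrt C₁ / V₀'.card else 0) *
      (if S ∈ V₀' then Real.sqrt C₁ / V₀'.card else 0) = C₁ / V₀'.card := by
    have h1 : ∀ S : Vert, (if S ∈ V₀' then Real.sqrt C₁ / V₀'.card else 0) *
        (if S ∈ V₀' then Real.sqrt C₁ / V₀'.card else 0) =
        if S ∈ V₀' then C₁ / ((V₀'.card:ℝ) * V₀'.card) else 0 := by
      intro S; by_cases h : S ∈ V₀'
      · rw [if_pos h, if_pos h, div_mul_div_comm, Real.mul_self_sqrt hC₁.le]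
      · simp [h]
    rw [Finset.sum_congr rfl fun S _ => h1 S, Finset.sum_ite_mem, Finset.univ_inter,
      Finset.sum_const, nsmul_eq_mul]
    field_simp
  have hnormsq : ‖φ‖ ^ 2 = ((k : ℝ) + C₁) / V₀'.card := by
    rw [← real_inner_self_eq_norm_sq, hφ]
    simp only [PiLp.inner_apply, RCLike.inner_apply, conj_trivial,
      WithLp.equiv_symm_apply, WithLp.ofLp_toLp, Fintype.sum_sum_type, Sum.elim_inl, Sum.elim_inr,
      neg_mul_neg]
    rw [hvert, hedge]
    field_simp
    ring
  have hinner : ⟪φ, ς⟫ = Real.sqrt (C₁ / V₀.card) := by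
    rw [hφ, hς]
    simp only [PiLp.inner_apply, RCLike.inner_apply, conj_trivial,
      WithLp.equiv_symm_apply, WithLp.ofLp_toLp, Fintype.sum_sum_type, Sum.elim_inl, Sum.elim_inr,
      mul_zero, zero_mul, Finset.sum_const_zero, add_zero]
    have h1 : ∀ S : Vert, (if S ∈ V₀' then Real.sqrt C₁ / V₀'.card else 0) *
        (if S ∈ V₀ then 1 / Real.sqrt V₀.card else 0) =
        if S ∈ V₀' then Real.sqrt C₁ / V₀'.card * (1 / Real.sqrt V₀.card) else 0 := by
      intro S; by_cases h : S ∈ V₀'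
      · rw [if_pos h, if_pos h, if_pos (hsub h)]
      · simp [h]
    rw [Finset.sum_congr rfl fun S _ => (mul_comm _ _).trans (h1 S), Finset.sum_ite_mem, Finset.univ_inter,
      Finset.sum_const, nsmul_eq_mul, Real.sqrt_div hC₁.le]
    rw [eq_comm, div_eq_iff (by positivity)]
    field_simp
  refine ⟨hnormsq, hinner, ?_⟩
  rw [real_inner_smul_left, hinner]
  have hnorm : ‖φ‖ = Real.sqrt (((k:ℝ) + C₁) / V₀'.card) := by
    rw [← hnormsq, Real.sqrt_sq (norm_nonneg _)]
  rw [hnorm, ← Real.sqrt_inv, ← Real.sqrt_mul (by positivity)]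
  congr 1
  field_simp
end
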